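/- Let C be a small category and J_¬¬ the dense (double-negation) Grothendieck topology on C, where a sieve S on c is covering iff for every f : d → c there exists g : e → d with f ∘ g ∈ S. Then the topos of sheaves Sh(C, J_¬¬) is Boolean, i.e., every subobject lattice in Sh(C, J_¬¬) is a Boolean algebra. -/

import Mathlib

open CategoryTheory CategoryTheory.Limits

instance {C : Type u} [SmallCategory C] : HasFiniteColimits (Sheaf (GrothendieckTopology.dense (C := C)) (Type u)) := inferInstance

instance {C : Type u} [SmallCategory C] : HasInitial (Sheaf (GrothendieckTopology.dense (C := C)) (Type u)) :=
  hasColimitsOfShape_of_hasFiniteColimits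
    (C := Sheaf (GrothendieckTopology.dense (C := C)) (Type u)) (J := Discrete PEmpty)

instance {C : Type u} [SmallCategory C] : HasBinaryCoproducts (Sheaf (GrothendieckTopology.dense (C := C)) (Type u)) :=
  hasColimitsOfShape_of_hasFiniteColimits
    (C := Sheaf (GrothendieckTopology.dense (C := C)) (Type u)) (J := Discrete WalkingPair)

open CategoryTheory CategoryTheory.Limits CategoryTheory.GrothendieckTopology Opposite


/-- The topos of sheaves for the dense (double-negation) topology on a small
category is Boolean: every subobject of every sheaf is complemented (and
subobject lattices of a topos are distributive, hence Boolean algebras). -/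
theorem stmt_10 {C : Type u} [SmallCategory C]
    (F : Sheaf (GrothendieckTopology.dense (C := C)) (Type u))
    (A : Subobject F) :
    ∃ B : Subobject F, A ⊓ B = ⊥ ∧ A ⊔ B = ⊤ := by
  classical
  -- the image subpresheaf of `A`
  set G : Subfunctor F.val := Subfunctor.range A.arrow.hom with hG
  -- its "negation" subpresheaf
  set Gc : Subfunctor F.val :=
    { obj := fun U => {x | ∀ (V : C) (f : V ⟶ unop U), F.val.map f.op x ∉ G.obj (op V)}
      map := by
        intro U V i x hx W f hf
        refine hx W (f ≫ i.unop) ?_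
        have : (f ≫ i.unop).op = i ≫ f.op := rfl
        rw [this, FunctorToTypes.map_comp_apply]
        exact hf } with hGc
  have hFs : Presieve.IsSheaf (GrothendieckTopology.dense (C := C)) F.val :=
    (CategoryTheory.isSheaf_iff_isSheaf_of_type _ _).mp F.cond
  -- `Gc` is a sheaf for the dense topology
  have hGcSheaf : Presieve.IsSheaf (GrothendieckTopology.dense (C := C)) Gc.toFunctor := by
    rw [Gc.isSheaf_iff hFs]
    intro U s hs V f hf
    obtain ⟨Z, g, hg⟩ := (GrothendieckTopology.dense_covering.mp hs) f
    refine hg Z (𝟙 Z) ?_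
    have h1 : F.val.map (𝟙 Z).op (F.val.map (g ≫ f).op s)
        = F.val.map g.op (F.val.map f.op s) := by
      rw [show ((𝟙 Z).op : op Z ⟶ op Z) = 𝟙 (op Z) from rfl, FunctorToTypes.map_id_apply,
        show ((g ≫ f).op : _ ⟶ op Z) = f.op ≫ g.op from rfl, FunctorToTypes.map_comp_apply]
    rw [h1]
    exact G.map g.op hf
  set Bs : Sheaf (GrothendieckTopology.dense (C := C)) (Type u) :=
    ⟨Gc.toFunctor, (CategoryTheory.isSheaf_iff_isSheaf_of_type _ _).mpr hGcSheaf⟩ with hBs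
  set ι : Bs ⟶ F := ⟨Gc.ι⟩ with hι
  have hmono : Mono ι := by
    have : Mono ((sheafToPresheaf (GrothendieckTopology.dense (C := C)) (Type u)).map ι) := by
      show Mono Gc.ι
      infer_instance
    exact (sheafToPresheaf (GrothendieckTopology.dense (C := C)) (Type u)).mono_of_mono_map this
  refine ⟨Subobject.mk ι, ?_, ?_⟩
  · -- the intersection is empty
    have hempty : ∀ (U : Cᵒᵖ) (x : (Subobject.underlying.obj (A ⊓ Subobject.mk ι)).val.obj U),
        False := by
      intro U x
      set y := (A ⊓ Subobject.mk ι).arrow.hom.app U x with hy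
      have hyG : y ∈ G.obj U := by
        have w := Subobject.ofLE_arrow (inf_le_left : (A ⊓ Subobject.mk ι) ≤ A)
        have := congr_arg (fun (t : _ ⟶ F) => t.hom.app U x) w
        simp only [ObjectProperty.FullSubcategory.comp_hom, NatTrans.comp_app, types_comp_apply] at this
        exact ⟨(Subobject.ofLE (A ⊓ Subobject.mk ι) A inf_le_left).hom.app U x, this⟩
      have hyGc : y ∈ Gc.obj U := by
        have w := Subobject.ofLEMk_comp (inf_le_right : (A ⊓ Subobject.mk ι) ≤ Subobject.mk ι)
        have := congr_arg (fun (t : _ ⟶ F) => t.hom.app U x) w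
        simp only [ObjectProperty.FullSubcategory.comp_hom, NatTrans.comp_app, types_comp_apply] at this
        rw [hy, ← this]
        exact ((Subobject.ofLEMk (A ⊓ Subobject.mk ι) ι inf_le_right).hom.app U x).2
      have := hyGc (unop U) (𝟙 (unop U))
      rw [show (𝟙 (unop U)).op = 𝟙 U from rfl, FunctorToTypes.map_id_apply] at this
      exact this hyG
    have hinit : IsInitial (Subobject.underlying.obj (A ⊓ Subobject.mk ι)) := by
      refine IsInitial.ofUniqueHom
        (fun Y => ⟨{ app := fun U => ↾fun x => (hempty U x).elim
                     naturality := by intro U V i; ext x; exact (hempty U x).elim }⟩) ?_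
      intro Y m
      refine Sheaf.hom_ext ?_
      ext U x
      exact (hempty U x).elim
    have hle : (A ⊓ Subobject.mk ι) ≤ ⊥ := by
      refine Subobject.le_of_comm (hinit.to _) ?_
      exact hinit.hom_ext _ _
    exact le_bot_iff.mp hle
  · -- the union is everything
    have hls : Presheaf.IsLocallySurjective (GrothendieckTopology.dense (C := C)) (A ⊔ Subobject.mk ι).arrow.hom := by
      constructor
      intro U s
      rw [GrothendieckTopology.dense_covering]
      intro Y f
      by_cases hc : ∃ (Z : C) (g : Z ⟶ Y), F.val.map (g ≫ f).op s ∈ G.obj (op Z)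
      · obtain ⟨Z, g, a, ha⟩ := hc
        refine ⟨Z, g, (Subobject.ofLE A (A ⊔ Subobject.mk ι) le_sup_left).hom.app (op Z) a, ?_⟩
        have w := Subobject.ofLE_arrow (le_sup_left : A ≤ (A ⊔ Subobject.mk ι))
        have := congr_arg (fun (t : _ ⟶ F) => t.hom.app (op Z) a) w
        simp only [ObjectProperty.FullSubcategory.comp_hom, NatTrans.comp_app, types_comp_apply] at this
        exact this.trans ha
      · push_neg at hc
        set y := F.val.map f.op s with hyy
        have hyGc : y ∈ Gc.obj (op Y) := by
          intro V h hmem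
          refine hc V h ?_
          have : (h ≫ f).op = f.op ≫ h.op := rfl
          rw [this, FunctorToTypes.map_comp_apply]
          exact hmem
        refine ⟨Y, 𝟙 Y,
          (Subobject.ofMkLE ι (A ⊔ Subobject.mk ι) le_sup_right).hom.app (op Y) ⟨y, hyGc⟩, ?_⟩
        have w := Subobject.ofMkLE_arrow (le_sup_right : Subobject.mk ι ≤ (A ⊔ Subobject.mk ι))
        have := congr_arg (fun (t : Bs ⟶ F) => t.hom.app (op Y) ⟨y, hyGc⟩) w
        simp only [ObjectProperty.FullSubcategory.comp_hom, NatTrans.comp_app, types_comp_apply] at this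
        refine this.trans ?_
        show Gc.ι.app (op Y) ⟨y, hyGc⟩ = F.val.map (𝟙 Y ≫ f).op s
        rw [Category.id_comp]
        rfl
    have hls' : Sheaf.IsLocallySurjective (A ⊔ Subobject.mk ι).arrow := hls
    have hepi : Epi (A ⊔ Subobject.mk ι).arrow := Sheaf.epi_of_isLocallySurjective' (A ⊔ Subobject.mk ι).arrow
    have hiso : IsIso (A ⊔ Subobject.mk ι).arrow := isIso_of_mono_of_epi _
    exact Subobject.eq_top_of_isIso_arrow (A ⊔ Subobject.mk ι)
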